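/- arXiv:2211.08854 — 3 statements merged into one kernel-verified Lean document; each statement's English description precedes it below -/
import Mathlib

section
/- Finite-time average consensus via graph convolutional filtering: let L ∈ ℝ^{N×N} be a symmetric positive semidefinite matrix (a graph Laplacian) with L·1 = 0, and suppose the eigenvalue 0 of L has multiplicity one (i.e., the kernel of L is exactly the span of the all-ones vector 1, equivalently the graph is connected). Then there exists a polynomial p with real coefficients such that p(L) = (1/N)·1·1ᵀ; consequently, for every signal x ∈ ℝ^N, applying the graph convolutional filter p(L) to x yields the vector whose every entry equals the average (1/N)Σ_{n=1}^{N} x_n. -/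
open Matrix Finset Polynomial

/-- Finite-time average consensus via graph convolutional filtering: if `L` is a
symmetric positive semidefinite graph Laplacian with `L·1 = 0` whose kernel is
exactly the span of the all-ones vector (the eigenvalue `0` has multiplicity
one, i.e., the graph is connected), then some polynomial graph filter `p(L)`
equals the average consensus operator `(1/N)·1·1ᵀ`, hence applying it to any
signal `x` yields the constant vector of the average of `x`. -/
theorem finite_time_consensus_graph_filter
    (N : ℕ) (L : Matrix (Fin N) (Fin N) ℝ)
    (hL : L.PosSemidef)
    (hL1 : L *ᵥ (fun _ => (1 : ℝ)) = 0)
    (hker : ∀ x : Fin N → ℝ, L *ᵥ x = 0 → ∃ c : ℝ, x = fun _ => c) :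
    ∃ p : Polynomial ℝ,
      Polynomial.aeval L p = Matrix.of (fun _ _ => (N : ℝ)⁻¹) ∧
      ∀ (x : Fin N → ℝ) (i : Fin N),
        ((Polynomial.aeval L p) *ᵥ x) i = (N : ℝ)⁻¹ * ∑ n, x n := by
  rcases Nat.eq_zero_or_pos N with hN | hN
  · subst hN
    refine ⟨0, ?_, ?_⟩
    · apply Subsingleton.elim
    · intro x i; exact absurd i.2 (by omega)
  have hNR : (0:ℝ) < (N:ℝ) := by exact_mod_cast hN
  set B : Matrix (Fin N) (Fin N) ℝ := Matrix.of (fun _ _ => (N : ℝ)⁻¹) with hB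
  -- basic identities
  have hLB : L * B = 0 := by
    ext i j
    have h := congrFun hL1 i
    simp only [mulVec, dotProduct, Pi.zero_apply, mul_one] at h
    simp only [hB, Matrix.mul_apply, Matrix.of_apply, Matrix.zero_apply, ← Finset.sum_mul, h,
      zero_mul]
  have hsumcol : ∀ j, ∑ k, L k j = 0 := by
    intro j
    have := congrFun hL1 j
    simp only [mulVec, dotProduct, Pi.zero_apply, mul_one] at this
    calc ∑ k, L k j = ∑ k, L j k := by
          refine Finset.sum_congr rfl fun k _ => ?_
          have := congrFun (congrFun hL.1 j) k
          simpa [Matrix.conjTranspose_apply] using this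
      _ = 0 := this
  have hBL : B * L = 0 := by
    ext i j
    simp [hB, Matrix.mul_apply, ← Finset.mul_sum, hsumcol j]
  have hBB : B * B = B := by
    ext i j
    simp [hB, Matrix.mul_apply, Finset.sum_const]
    field_simp
  set M : Matrix (Fin N) (Fin N) ℝ := L + B with hM
  have hMB : M * B = B := by rw [hM, add_mul, hLB, hBB, zero_add]
  have hML : M * L = L * L := by rw [hM, add_mul, hBL, add_zero]
  -- M has nonzero determinant
  have hdet : M.det ≠ 0 := by
    intro h
    obtain ⟨v, hv, hMv⟩ := (Matrix.exists_mulVec_eq_zero_iff).2 h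
    have hquad : v ⬝ᵥ (M *ᵥ v) = 0 := by rw [hMv, dotProduct_zero]
    have hBpsd : v ⬝ᵥ (B *ᵥ v) = (N:ℝ)⁻¹ * (∑ n, v n)^2 := by
      simp only [hB, dotProduct, mulVec, Matrix.of_apply, ← Finset.mul_sum]
      rw [← Finset.sum_mul]
      ring
    have hLq : (0:ℝ) ≤ v ⬝ᵥ (L *ᵥ v) := by
      have := hL.dotProduct_mulVec_nonneg v
      simpa using this
    have hBq : (0:ℝ) ≤ v ⬝ᵥ (B *ᵥ v) := by
      rw [hBpsd]; positivity
    have hsplit : v ⬝ᵥ (M *ᵥ v) = v ⬝ᵥ (L *ᵥ v) + v ⬝ᵥ (B *ᵥ v) := by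
      rw [hM, Matrix.add_mulVec, dotProduct_add]
    have hLzero : v ⬝ᵥ (L *ᵥ v) = 0 := by linarith [hsplit ▸ hquad]
    have hBzero : v ⬝ᵥ (B *ᵥ v) = 0 := by linarith [hsplit ▸ hquad]
    have hLv : L *ᵥ v = 0 := by
      have := (hL.dotProduct_mulVec_zero_iff v).1 (by simpa using hLzero)
      exact this
    obtain ⟨c, rfl⟩ := hker v hLv
    have hsum : (∑ _n : Fin N, c) = (N:ℝ) * c := by simp [mul_comm]
    rw [hBpsd, hsum] at hBzero
    have hc : c = 0 := by
      by_contra hc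
      have : (N:ℝ)⁻¹ * ((N:ℝ)*c)^2 > 0 := by positivity
      linarith
    exact hv (by funext n; simp [hc])
  set χ := M.charpoly with hχ
  set q := χ.divX with hq
  set c := χ.coeff 0 with hc
  have hcne : c ≠ 0 := by
    intro h0
    apply hdet
    rw [Matrix.det_eq_sign_charpoly_coeff, ← hχ, ← hc, h0, mul_zero]
  set D := Polynomial.aeval M q with hD
  set A := Polynomial.aeval L q with hA
  -- Cayley–Hamilton
  have hCH : M * D + c • (1 : Matrix (Fin N) (Fin N) ℝ) = 0 := by
    have h1 : Polynomial.aeval M χ = 0 := Matrix.aeval_self_charpoly M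
    have h2 : (Polynomial.X * q + Polynomial.C c : ℝ[X]) = χ := Polynomial.X_mul_divX_add χ
    rw [← h2] at h1
    simpa [Algebra.algebraMap_eq_smul_one, mul_comm] using h1
  have hDM : D * M = -(c • (1 : Matrix (Fin N) (Fin N) ℝ)) := by
    have hcomm : D * M = M * D := by
      have : Polynomial.aeval M (q * Polynomial.X) = Polynomial.aeval M (Polynomial.X * q) := by
        rw [mul_comm]
      simpa [_root_.map_mul] using this
    rw [hcomm, eq_neg_iff_add_eq_zero]; exact hCH
  have hDB : D * B = -(c • B) := by
    have : D * (M * B) = D * M * B := by rw [mul_assoc]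
    rw [hMB, hDM, neg_mul, smul_mul_assoc, one_mul] at this
    rw [this]
  -- key: aeval M r * L = aeval L r * L
  have hpowL : ∀ k : ℕ, M ^ k * L = L ^ k * L := by
    intro k
    induction k with
    | zero => simp
    | succ n ih =>
      rw [pow_succ, pow_succ, mul_assoc _ M L, hML, ← mul_assoc, ih, mul_assoc, ← mul_assoc]
  have haevalL : ∀ r : ℝ[X], Polynomial.aeval M r * L = Polynomial.aeval L r * L := by
    intro r
    induction r using Polynomial.induction_on' with
    | add p q hp hq => rw [map_add, map_add, add_mul, add_mul, hp, hq]
    | monomial n a =>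
      rw [Polynomial.aeval_monomial, Polynomial.aeval_monomial,
        Algebra.algebraMap_eq_smul_one, smul_mul_assoc, one_mul, smul_mul_assoc,
        smul_mul_assoc, smul_mul_assoc, one_mul, hpowL]
  have hDL : D * L = A * L := haevalL q
  -- combine: A * L = -(c•1) + c•B
  have hkey : A * L = -(c • (1 : Matrix (Fin N) (Fin N) ℝ)) + c • B := by
    have : D * M = D * L + D * B := by rw [hM, mul_add]
    rw [hDM, hDL, hDB] at this
    linear_combination (norm := noncomm_ring) -this
  have hBval : (1 : Matrix (Fin N) (Fin N) ℝ) + c⁻¹ • (A * L) = B := by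
    rw [hkey, smul_add, smul_neg, smul_smul, smul_smul, inv_mul_cancel₀ hcne, one_smul, one_smul]
    abel
  refine ⟨Polynomial.C c⁻¹ * (q * Polynomial.X) + 1, ?_, ?_⟩
  · have : Polynomial.aeval L (Polynomial.C c⁻¹ * (q * Polynomial.X) + 1)
        = c⁻¹ • (A * L) + 1 := by
      simp [map_add, _root_.map_mul, Polynomial.aeval_C, Algebra.algebraMap_eq_smul_one,
        smul_mul_assoc, hA]
    rw [this, add_comm, hBval, hB]
  · intro x i
    have : Polynomial.aeval L (Polynomial.C c⁻¹ * (q * Polynomial.X) + 1)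
        = c⁻¹ • (A * L) + 1 := by
      simp [map_add, _root_.map_mul, Polynomial.aeval_C, Algebra.algebraMap_eq_smul_one,
        smul_mul_assoc, hA]
    rw [this, add_comm, hBval]
    simp [hB, mulVec, dotProduct, ← Finset.mul_sum]
end

section
/- Sufficiency of the biorthogonality conditions for perfect reconstruction in a two-channel critically-sampled graph filter bank on a bipartite graph: let L ∈ ℝ^{N×N} and let J be a diagonal matrix with J² = I such that J·L·J = 2I − L (the spectral folding property of bipartite normalized Laplacians). Let D₁ = (I + J)/2 and D₂ = (I − J)/2 be the diagonal 0/1 downsampling matrices corresponding to the two parts of the bipartition. Let h₁, h₂, g₁, g₂ be real polynomials satisfying, as polynomial identities in λ, g₁(λ)h₁(λ) + g₂(λ)h₂(λ) = 2 and g₁(λ)h₁(2−λ) − g₂(λ)h₂(2−λ) = 0. Then g₁(L)·D₁·h₁(L) + g₂(L)·D₂·h₂(L) = I, i.e., every signal x ∈ ℝ^N is perfectly reconstructed from the two critically-sampled channel outputs D₁h₁(L)x and D₂h₂(L)x. -/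
open Matrix Finset Polynomial

/-- Sufficiency of the biorthogonality conditions for perfect reconstruction in
a two-channel critically-sampled graph filter bank on a bipartite graph: if `J`
is a diagonal matrix with `J² = I` satisfying the spectral folding property
`J L J = 2I − L`, `D₁ = (I + J)/2` and `D₂ = (I − J)/2` are the downsampling
matrices, and the analysis/synthesis polynomials satisfy
`g₁(λ)h₁(λ) + g₂(λ)h₂(λ) = 2` and `g₁(λ)h₁(2−λ) − g₂(λ)h₂(2−λ) = 0` as
polynomial identities, then `g₁(L) D₁ h₁(L) + g₂(L) D₂ h₂(L) = I`. -/
theorem two_channel_bipartite_filter_bank_perfect_reconstruction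
    (N : ℕ) (L J : Matrix (Fin N) (Fin N) ℝ) (j : Fin N → ℝ)
    (hJdiag : J = Matrix.diagonal j)
    (hJ2 : J * J = 1)
    (hfold : J * L * J = 2 • (1 : Matrix (Fin N) (Fin N) ℝ) - L)
    (h₁ h₂ g₁ g₂ : Polynomial ℝ)
    (hbio1 : g₁ * h₁ + g₂ * h₂ = Polynomial.C 2)
    (hbio2 : g₁ * (h₁.comp (Polynomial.C 2 - Polynomial.X))
           - g₂ * (h₂.comp (Polynomial.C 2 - Polynomial.X)) = 0) :
    Polynomial.aeval L g₁ * ((2 : ℝ)⁻¹ • (1 + J)) * Polynomial.aeval L h₁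
      + Polynomial.aeval L g₂ * ((2 : ℝ)⁻¹ • (1 - J)) * Polynomial.aeval L h₂
      = 1 := by
  set M : Matrix (Fin N) (Fin N) ℝ := 2 • (1 : Matrix (Fin N) (Fin N) ℝ) - L with hM
  have hJL : J * L = M * J := by
    have := congrArg (· * J) hfold
    simpa [Matrix.mul_assoc, hJ2] using this
  -- J commutes with polynomials of L via folding
  have hcomm : ∀ p : Polynomial ℝ, J * Polynomial.aeval L p = Polynomial.aeval M p * J := by
    intro p
    induction p using Polynomial.induction_on' with
    | add p q hp hq => simp [map_add, Matrix.mul_add, Matrix.add_mul, hp, hq]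
    | monomial n a =>
      have hpow : ∀ n : ℕ, J * L ^ n = M ^ n * J := by
        intro n
        induction n with
        | zero => simp
        | succ k ih =>
          rw [pow_succ', ← Matrix.mul_assoc, hJL, Matrix.mul_assoc, ih,
            ← Matrix.mul_assoc, ← pow_succ']
      simp only [Polynomial.aeval_monomial, ← Matrix.mul_assoc]
      rw [← Algebra.commutes (R := ℝ) a J, Matrix.mul_assoc, hpow n, ← Matrix.mul_assoc]
  have hMsub : M = Polynomial.aeval L ((Polynomial.C 2 - Polynomial.X : Polynomial ℝ)) := by
    rw [hM, map_sub, Polynomial.aeval_X]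
    norm_num
    exact (map_ofNat _ 2).symm
  have hcomp : ∀ p : Polynomial ℝ,
      Polynomial.aeval M p = Polynomial.aeval L (p.comp (Polynomial.C 2 - Polynomial.X)) := by
    intro p
    rw [hMsub, Polynomial.aeval_comp]
  have key1 : Polynomial.aeval L g₁ * Polynomial.aeval L h₁
      + Polynomial.aeval L g₂ * Polynomial.aeval L h₂ = (2 : Matrix (Fin N) (Fin N) ℝ) := by
    have := congrArg (Polynomial.aeval L) hbio1
    simpa [map_add, _root_.map_mul, map_ofNat] using this
  have key2 : Polynomial.aeval L g₁ * (J * Polynomial.aeval L h₁)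
      - Polynomial.aeval L g₂ * (J * Polynomial.aeval L h₂) = 0 := by
    have h0 : Polynomial.aeval L g₁ * Polynomial.aeval L (h₁.comp (Polynomial.C 2 - Polynomial.X))
        - Polynomial.aeval L g₂ * Polynomial.aeval L (h₂.comp (Polynomial.C 2 - Polynomial.X))
        = 0 := by
      have := congrArg (Polynomial.aeval L) hbio2
      simpa [map_sub, _root_.map_mul] using this
    rw [hcomm h₁, hcomm h₂, hcomp, hcomp, ← Matrix.mul_assoc, ← Matrix.mul_assoc,
      ← Matrix.sub_mul, h0, Matrix.zero_mul]
  have expand : Polynomial.aeval L g₁ * ((2 : ℝ)⁻¹ • (1 + J)) * Polynomial.aeval L h₁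
      + Polynomial.aeval L g₂ * ((2 : ℝ)⁻¹ • (1 - J)) * Polynomial.aeval L h₂
      = (2 : ℝ)⁻¹ • ((Polynomial.aeval L g₁ * Polynomial.aeval L h₁
          + Polynomial.aeval L g₂ * Polynomial.aeval L h₂)
        + (Polynomial.aeval L g₁ * (J * Polynomial.aeval L h₁)
          - Polynomial.aeval L g₂ * (J * Polynomial.aeval L h₂))) := by
    simp only [Matrix.mul_smul, Matrix.smul_mul, Matrix.mul_add, Matrix.add_mul,
      Matrix.mul_sub, Matrix.sub_mul, Matrix.mul_one, Matrix.one_mul, smul_add, smul_sub,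
      Matrix.mul_assoc]
    abel
  rw [expand, key1, key2, add_zero,
    show ((2 : Matrix (Fin N) (Fin N) ℝ)) = (2 : ℝ) • 1 from by rw [two_smul]; norm_num, smul_smul]
  norm_num
end

section
/- Permutation equivariance of graph convolutional neural networks: let σ: ℝ → ℝ be any function applied entrywise to vectors (a pointwise activation), and consider an L-layer GNN Φ(S, x) defined by x₀ = x and x_ℓ = σ(Σ_{k=0}^{K} h_{ℓ,k} S^k x_{ℓ−1}) for ℓ = 1,...,L, with output Φ(S,x) = x_L, where h_{ℓ,k} ∈ ℝ are fixed filter parameters per layer. Then for any N×N permutation matrix P (the matrix of a permutation of {1,...,N}), any S ∈ ℝ^{N×N} and any x ∈ ℝ^N, Φ(PᵀSP, Pᵀx) = Pᵀ·Φ(S, x). -/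
open Matrix Finset

/-- An `L`-layer graph convolutional neural network: `gcnn act K h S 0 x = x`
and `gcnn act K h S (ℓ+1) x = σ(∑_{k=0}^{K} h_{ℓ+1,k} S^k (gcnn act K h S ℓ x))`,
where the activation `act` is applied entrywise and `h ℓ k` is the `k`-th
filter parameter of layer `ℓ`. -/
def gcnn {N : ℕ} (act : ℝ → ℝ) (K : ℕ) (h : ℕ → ℕ → ℝ)
    (S : Matrix (Fin N) (Fin N) ℝ) : ℕ → (Fin N → ℝ) → (Fin N → ℝ)
  | 0, x => x
  | (l + 1), x => fun i =>
      act (((∑ k ∈ Finset.range (K + 1), h (l + 1) k • S ^ k) *ᵥ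
        gcnn act K h S l x) i)

/-- Permutation equivariance of graph convolutional neural networks: for any
pointwise activation `act`, any filter parameters, any permutation matrix `P`
(the matrix of a permutation `σ` of the nodes), any GSO `S` and signal `x`,
the GNN run on the permuted graph `PᵀSP` with permuted input `Pᵀx` outputs the
permutation `Pᵀ Φ(S, x)` of the original output. -/
theorem gcnn_permutation_equivariance
    (N K L : ℕ) (act : ℝ → ℝ) (h : ℕ → ℕ → ℝ)
    (σ : Equiv.Perm (Fin N)) (P S : Matrix (Fin N) (Fin N) ℝ)
    (hP : P = Matrix.of fun i j => if σ i = j then (1 : ℝ) else 0)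
    (x : Fin N → ℝ) :
    gcnn act K h (Pᵀ * S * P) L (Pᵀ *ᵥ x) = Pᵀ *ᵥ gcnn act K h S L x := by
  have hPPt : P * Pᵀ = 1 := by
    ext i j
    simp only [hP, Matrix.mul_apply, Matrix.transpose_apply, Matrix.of_apply,
      ite_mul, one_mul, zero_mul, Finset.sum_ite_eq', Finset.mem_univ, if_true]
    by_cases hij : i = j <;> simp [hij, Matrix.one_apply]
    · intro hc; exact hij hc.symm
  have hPtP : Pᵀ * P = 1 := by
    ext i j
    simp only [hP, Matrix.mul_apply, Matrix.transpose_apply, Matrix.of_apply,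
      mul_ite, mul_one, mul_zero]
    rw [Finset.sum_eq_single (σ.symm j)]
    · by_cases hij : i = j <;>
        simp [Matrix.one_apply, hij, Equiv.apply_eq_iff_eq_symm_apply, eq_comm]
    · intro b _ hb
      simp [Equiv.apply_eq_iff_eq_symm_apply]; intro hc; exact absurd hc hb
    · simp
  -- powers
  have hpow : ∀ k : ℕ, (Pᵀ * S * P) ^ k = Pᵀ * S ^ k * P := by
    intro k
    induction k with
    | zero => rw [pow_zero, pow_zero, Matrix.mul_one, hPtP]
    | succ k ih =>
        rw [pow_succ, pow_succ, ih]
        rw [show Pᵀ * S ^ k * P * (Pᵀ * S * P) = Pᵀ * S ^ k * (P * Pᵀ) * S * P by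
          simp only [Matrix.mul_assoc], hPPt]
        simp [Matrix.mul_assoc]
  -- entrywise description of Pᵀ *ᵥ
  have hvec : ∀ (v : Fin N → ℝ) (i : Fin N), (Pᵀ *ᵥ v) i = v (σ.symm i) := by
    intro v i
    subst hP
    simp only [Matrix.mulVec, dotProduct, Matrix.transpose_apply,
      Matrix.of_apply, ite_mul, one_mul, zero_mul]
    rw [Finset.sum_eq_single (σ.symm i)]
    · simp
    · intro b _ hb
      simp [Equiv.apply_eq_iff_eq_symm_apply]; intro hc; exact absurd hc hb
    · simp
  induction L with
  | zero => rfl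
  | succ L ih =>
      funext i
      show act _ = (Pᵀ *ᵥ fun i => act _) i
      rw [hvec]
      congr 1
      set H := ∑ k ∈ Finset.range (K + 1), h (L + 1) k • S ^ k with hHdef
      have hH : (∑ k ∈ Finset.range (K + 1), h (L + 1) k • (Pᵀ * S * P) ^ k)
          = Pᵀ * H * P := by
        rw [hHdef, Matrix.mul_sum, Matrix.sum_mul]
        refine Finset.sum_congr rfl fun k _ => ?_
        rw [hpow k]
        simp [Matrix.mul_smul, Matrix.smul_mul]
      rw [hH, ih]
      have key : (Pᵀ * H * P) *ᵥ (Pᵀ *ᵥ gcnn act K h S L x)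
          = Pᵀ *ᵥ (H *ᵥ gcnn act K h S L x) := by
        rw [Matrix.mulVec_mulVec,
          show Pᵀ * H * P * Pᵀ = Pᵀ * H * (P * Pᵀ) by simp only [Matrix.mul_assoc],
          hPPt, Matrix.mul_one, ← Matrix.mulVec_mulVec]
      rw [key, hvec]
end
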